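/- The matrix exponential restricted to real symmetric n×n matrices is a bijection onto the set of real symmetric positive definite n×n matrices: every symmetric positive definite matrix has a unique symmetric matrix logarithm. -/

import Mathlib

open Matrix

section aux

variable {n : ℕ}

lemma coe_comp_id (f : Fin n → ℝ) : (RCLike.ofReal ∘ f : Fin n → ℝ) = f := by
  funext i; simp [RCLike.ofReal_real_eq_id]

lemma unitary_mul_star (U : Matrix.unitaryGroup (Fin n) ℝ) :
    (U : Matrix (Fin n) (Fin n) ℝ) * star (U : Matrix (Fin n) (Fin n) ℝ) = 1 :=
  Matrix.mem_unitaryGroup_iff.mp U.2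

lemma unitary_star_mul (U : Matrix.unitaryGroup (Fin n) ℝ) :
    star (U : Matrix (Fin n) (Fin n) ℝ) * (U : Matrix (Fin n) (Fin n) ℝ) = 1 :=
  mul_eq_one_comm.mp (unitary_mul_star U)

lemma inv_of_unitary (U : Matrix.unitaryGroup (Fin n) ℝ) :
    (U : Matrix (Fin n) (Fin n) ℝ)⁻¹ = star (U : Matrix (Fin n) (Fin n) ℝ) :=
  Matrix.inv_eq_left_inv (unitary_star_mul U)

lemma isHermitian_unitary_conj (U : Matrix.unitaryGroup (Fin n) ℝ) (d : Fin n → ℝ) :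
    ((U : Matrix (Fin n) (Fin n) ℝ) * diagonal d * star (U : Matrix (Fin n) (Fin n) ℝ)).IsHermitian := by
  rw [Matrix.star_eq_conjTranspose]
  exact Matrix.isHermitian_mul_mul_conjTranspose _ (Matrix.isHermitian_diagonal d)

/-- Conjugation of a positive diagonal by a real orthogonal matrix is PosDef. -/
lemma posDef_unitary_conj (U : Matrix.unitaryGroup (Fin n) ℝ) {d : Fin n → ℝ}
    (hd : ∀ i, 0 < d i) :
    Matrix.PosDef ((U : Matrix (Fin n) (Fin n) ℝ) * diagonal d * star (U : Matrix (Fin n) (Fin n) ℝ)) := by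
  refine Matrix.PosDef.of_dotProduct_mulVec_pos (isHermitian_unitary_conj U d) fun x hx => ?_
  have hy : star (U : Matrix (Fin n) (Fin n) ℝ) *ᵥ x ≠ 0 := by
    intro h0
    apply hx
    have := congrArg (fun v => (U : Matrix (Fin n) (Fin n) ℝ) *ᵥ v) h0
    simpa [Matrix.mulVec_mulVec, unitary_mul_star U] using this
  have key := (Matrix.PosDef.diagonal hd).dotProduct_mulVec_pos hy
  calc (0:ℝ) < star (star (U : Matrix (Fin n) (Fin n) ℝ) *ᵥ x) ⬝ᵥ
      (diagonal d *ᵥ (star (U : Matrix (Fin n) (Fin n) ℝ) *ᵥ x)) := key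
    _ = star x ⬝ᵥ ((U : Matrix (Fin n) (Fin n) ℝ) * diagonal d * star (U : Matrix (Fin n) (Fin n) ℝ)) *ᵥ x := by
      simp only [Matrix.star_mulVec, Matrix.star_eq_conjTranspose, conjTranspose_conjTranspose,
        ← Matrix.mulVec_mulVec, Matrix.dotProduct_mulVec, Matrix.vecMul_vecMul]

lemma exp_spectral {A : Matrix (Fin n) (Fin n) ℝ} (hA : A.IsHermitian) :
    NormedSpace.exp A =
      (hA.eigenvectorUnitary : Matrix (Fin n) (Fin n) ℝ) *
        diagonal (fun i => Real.exp (hA.eigenvalues i)) *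
        star (hA.eigenvectorUnitary : Matrix (Fin n) (Fin n) ℝ) := by
  conv_lhs => rw [hA.spectral_theorem, Unitary.conjStarAlgAut_apply]
  rw [← inv_of_unitary,
    Matrix.exp_conj _ _ (isUnit_iff_exists.mpr ⟨_, unitary_mul_star hA.eigenvectorUnitary, unitary_star_mul hA.eigenvectorUnitary⟩),
    Matrix.exp_diagonal, inv_of_unitary]
  congr 2
  funext i
  simp [Pi.exp_def, Function.comp, RCLike.ofReal_real_eq_id, ← Real.exp_eq_exp_ℝ]

/-- Well-definedness: conjugated diagonals with exp'd entries equal implies originals equal. -/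
lemma conj_diag_eq {U V : Matrix.unitaryGroup (Fin n) ℝ} {a b : Fin n → ℝ}
    (h : (U : Matrix (Fin n) (Fin n) ℝ) * diagonal (fun i => Real.exp (a i)) * star (U : Matrix (Fin n) (Fin n) ℝ)
       = (V : Matrix (Fin n) (Fin n) ℝ) * diagonal (fun i => Real.exp (b i)) * star (V : Matrix (Fin n) (Fin n) ℝ)) :
    (U : Matrix (Fin n) (Fin n) ℝ) * diagonal a * star (U : Matrix (Fin n) (Fin n) ℝ)
      = (V : Matrix (Fin n) (Fin n) ℝ) * diagonal b * star (V : Matrix (Fin n) (Fin n) ℝ) := by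
  set U' := (U : Matrix (Fin n) (Fin n) ℝ) with hU'
  set V' := (V : Matrix (Fin n) (Fin n) ℝ) with hV'
  set W := star V' * U' with hW
  have hVW : V' * W = U' := by rw [hW, ← mul_assoc, unitary_mul_star V, one_mul]
  have hWU : W * star U' = star V' := by rw [hW, mul_assoc, unitary_mul_star U, mul_one]
  have hcomm : W * diagonal (fun i => Real.exp (a i)) = diagonal (fun i => Real.exp (b i)) * W := by
    have h1 := congrArg (fun X => star V' * X * U') h
    simp only [← mul_assoc] at h1
    calc W * diagonal (fun i => Real.exp (a i))
        = star V' * U' * diagonal (fun i => Real.exp (a i)) * (star U' * U') := by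
          rw [unitary_star_mul U, mul_one, hW]
      _ = star V' * (V' * diagonal (fun i => Real.exp (b i)) * star V') * U' := by
          simp only [← mul_assoc]; exact h1
      _ = diagonal (fun i => Real.exp (b i)) * W := by
          simp only [← mul_assoc]
          rw [unitary_star_mul V, one_mul, hW, mul_assoc]
  have hcomm2 : W * diagonal a = diagonal b * W := by
    ext i j
    have hij := congrFun (congrFun hcomm i) j
    simp only [Matrix.mul_diagonal, Matrix.diagonal_mul] at hij ⊢
    by_cases hw : W i j = 0
    · simp [hw]
    · have hexp : Real.exp (a j) = Real.exp (b i) := by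
        have := hij
        rw [mul_comm (Real.exp (b i)) (W i j)] at this
        exact mul_left_cancel₀ hw this
      have hab : a j = b i := Real.exp_injective hexp
      rw [hab, mul_comm]
  calc U' * diagonal a * star U'
      = V' * (W * diagonal a) * star U' := by rw [← mul_assoc, hVW]
    _ = V' * (diagonal b * W) * star U' := by rw [hcomm2]
    _ = V' * diagonal b * (W * star U') := by simp only [mul_assoc]
    _ = V' * diagonal b * star V' := by rw [hWU]

end aux

theorem exp_bijOn_symmetric_posDef (n : ℕ) :
    Set.BijOn (NormedSpace.exp)
      {A : Matrix (Fin n) (Fin n) ℝ | Aᵀ = A}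
      {M : Matrix (Fin n) (Fin n) ℝ | M.PosDef} := by
  have herm : ∀ A : Matrix (Fin n) (Fin n) ℝ, Aᵀ = A ↔ A.IsHermitian := by
    intro A
    rw [Matrix.IsHermitian, conjTranspose_eq_transpose_of_trivial]
  refine ⟨?_, ?_, ?_⟩
  · -- MapsTo
    intro A hA
    have hA' : A.IsHermitian := (herm A).mp hA
    rw [Set.mem_setOf_eq, exp_spectral hA']
    exact posDef_unitary_conj _ (fun i => Real.exp_pos _)
  · -- InjOn
    intro A hA B hB hAB
    have hA' : A.IsHermitian := (herm A).mp hA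
    have hB' : B.IsHermitian := (herm B).mp hB
    rw [exp_spectral hA', exp_spectral hB'] at hAB
    have key := conj_diag_eq hAB
    calc A = _ := hA'.spectral_theorem
      _ = (hB'.eigenvectorUnitary : Matrix (Fin n) (Fin n) ℝ) *
            diagonal (RCLike.ofReal ∘ hB'.eigenvalues) *
            star (hB'.eigenvectorUnitary : Matrix (Fin n) (Fin n) ℝ) := by
          rw [coe_comp_id, coe_comp_id]
          exact key
      _ = B := hB'.spectral_theorem.symm
  · -- SurjOn
    intro M hM
    have hM' : M.IsHermitian := hM.isHermitian
    set U := hM'.eigenvectorUnitary with hUdef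
    set A := (U : Matrix (Fin n) (Fin n) ℝ) * diagonal (fun i => Real.log (hM'.eigenvalues i)) *
      star (U : Matrix (Fin n) (Fin n) ℝ) with hAdef
    refine ⟨A, (herm A).mpr (isHermitian_unitary_conj U _), ?_⟩
    rw [hAdef, ← inv_of_unitary,
      Matrix.exp_conj _ _ (isUnit_iff_exists.mpr ⟨_, unitary_mul_star U, unitary_star_mul U⟩),
      Matrix.exp_diagonal, inv_of_unitary]
    have hlog : NormedSpace.exp (fun i => Real.log (hM'.eigenvalues i))
        = fun i => hM'.eigenvalues i := by
      funext i
      rw [Pi.exp_def, ← Real.exp_eq_exp_ℝ]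
      exact Real.exp_log (hM.eigenvalues_pos i)
    rw [hlog]
    conv_rhs => rw [hM'.spectral_theorem, Unitary.conjStarAlgAut_apply]
    rw [coe_comp_id]
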